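/- (Pooling equilibrium PBNE₁ on N.) Let α, λ, δ, c be positive reals, f > 0, θ ∈ [0, 1], q ∈ [0, 1], and suppose θ·(δ + λ + α·(1 − 1/f)) ≥ δ + c. Then the profile in which both sender types play N, the defender plays R after N and R̄ after G, with on-path belief p = θ, satisfies all the sequential-rationality conditions: (i) θ·(λ − α/f − c) + (1 − θ)·(−δ − c) ≥ θ·(−α) (R is optimal at N under belief θ); (ii) 0 ≥ q·(−c) + (1 − q)·(−δ − c) (R̄ is optimal at G under any belief q); (iii) α/f − β ≥ −β (the bot cannot gain by deviating from N to G); (iv) the legitimate user's payoff 0 from N is at least its payoff 0 from G. -/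
import Mathlib

/-- Pooling equilibrium `PBNE₁` on `N`: if `θ·(δ + lam + α(1 − 1/f)) ≥ δ + c`, the profile
`((N,N), (R, R̄))` with on-path belief `p = θ` satisfies all sequential-rationality
conditions. -/
theorem pooling_PBNE1_on_N
    (α lam δ c β f θ q : ℝ)
    (hα : α > 0) (hlam : lam > 0) (hδ : δ > 0) (hc : c > 0)
    (hf : f > 0) (hθ : θ ∈ Set.Icc (0 : ℝ) 1) (hq : q ∈ Set.Icc (0 : ℝ) 1)
    (hcond : θ * (δ + lam + α * (1 - 1 / f)) ≥ δ + c) :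
    θ * (lam - α / f - c) + (1 - θ) * (-δ - c) ≥ θ * (-α) ∧
    (0 : ℝ) ≥ q * (-c) + (1 - q) * (-δ - c) ∧
    α / f - β ≥ -β ∧
    (0 : ℝ) ≥ (0 : ℝ) := by
  obtain ⟨hq0, hq1⟩ := hq
  have h3 : α / f > 0 := div_pos hα hf
  have e : θ * (lam - α / f - c) + (1 - θ) * (-δ - c) - θ * (-α)
      = θ * (δ + lam + α * (1 - 1 / f)) - (δ + c) := by ring
  refine ⟨by linarith, by nlinarith, by linarith, le_refl 0⟩
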